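/- For a standard normal random variable X with quantile function Q(u) = Φ⁻¹(u), the first LP moment LP(1;X) = ∫₀¹ Q(u)·√12(u − 1/2) du satisfies |LP(1;X)|² = 3/π, so |LP(1;X)|²/Var(X) = 3/π ≈ 0.955. -/

import Mathlib

open MeasureTheory Set Real Filter Topology

noncomputable def gphi : ℝ → ℝ := fun t => Real.exp (-t ^ 2 / 2) / Real.sqrt (2 * Real.pi)

lemma gphi_eq : gphi = fun t => Real.exp (-(1/2) * t ^ 2) * (Real.sqrt (2 * Real.pi))⁻¹ := by
  funext t; rw [gphi]; ring_nf

lemma gphi_cont : Continuous gphi := by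
  rw [gphi_eq]; fun_prop

lemma gphi_pos (t : ℝ) : 0 < gphi t := by
  have : (0:ℝ) < Real.sqrt (2 * Real.pi) := by positivity
  exact div_pos (Real.exp_pos _) this

lemma gphi_integrable : Integrable gphi := by
  rw [gphi_eq]
  exact (integrable_exp_neg_mul_sq (by norm_num)).mul_const _

lemma gphi_integral : ∫ t, gphi t = 1 := by
  rw [gphi_eq]
  rw [integral_mul_const, integral_gaussian]
  rw [← Real.sqrt_inv, ← Real.sqrt_mul (by positivity)]
  rw [show Real.pi / (1/2) * (2 * Real.pi)⁻¹ = 1 by field_simp, Real.sqrt_one]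


noncomputable def Phi0 : ℝ → ℝ := fun x => ∫ t in Iic x, gphi t

lemma Phi0_eq (x : ℝ) : Phi0 x = Phi0 0 + ∫ t in (0:ℝ)..x, gphi t := by
  rw [Phi0, Phi0, ← intervalIntegral.integral_Iic_sub_Iic gphi_integrable.integrableOn
    gphi_integrable.integrableOn]
  ring

lemma Phi0_hasDerivAt (x : ℝ) : HasDerivAt Phi0 (gphi x) x := by
  have h : HasDerivAt (fun y => Phi0 0 + ∫ t in (0:ℝ)..y, gphi t) (gphi x) x := by
    refine HasDerivAt.const_add _ ?_
    exact (intervalIntegral.integral_hasStrictDerivAt_right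
      (gphi_cont.intervalIntegrable _ _) (gphi_cont.stronglyMeasurableAtFilter _ _)
      gphi_cont.continuousAt).hasDerivAt
  exact h.congr_of_eventuallyEq (Filter.Eventually.of_forall fun y => (Phi0_eq y))

lemma Phi0_cont : Continuous Phi0 :=
  continuous_iff_continuousAt.2 fun x => (Phi0_hasDerivAt x).continuousAt

lemma Phi0_strictMono : StrictMono Phi0 :=
  strictMono_of_deriv_pos (fun x => by rw [(Phi0_hasDerivAt x).deriv]; exact gphi_pos x)

lemma Phi0_pos (x : ℝ) : 0 < Phi0 x := by
  rw [Phi0]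
  rw [setIntegral_pos_iff_support_of_nonneg_ae
    (Filter.Eventually.of_forall fun t => (gphi_pos t).le) gphi_integrable.integrableOn]
  have : Function.support gphi = univ := by
    ext t; simp [Function.mem_support, (gphi_pos t).ne']
  rw [this, univ_inter]
  simp [Real.volume_Iic]

lemma Phi0_lt_one (x : ℝ) : Phi0 x < 1 := by
  have hsplit : Phi0 x + ∫ t in Ioi x, gphi t = 1 := by
    rw [Phi0, ← gphi_integral, ← setIntegral_union (Iic_disjoint_Ioi le_rfl) measurableSet_Ioi
      gphi_integrable.integrableOn gphi_integrable.integrableOn, Iic_union_Ioi,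
      Measure.restrict_univ]
  have hpos : 0 < ∫ t in Ioi x, gphi t := by
    rw [setIntegral_pos_iff_support_of_nonneg_ae
      (Filter.Eventually.of_forall fun t => (gphi_pos t).le) gphi_integrable.integrableOn]
    have : Function.support gphi = univ := by
      ext t; simp [Function.mem_support, (gphi_pos t).ne']
    rw [this, univ_inter]
    simp [Real.volume_Ioi]
  linarith

lemma Phi0_tendsto_atTop : Tendsto Phi0 atTop (𝓝 1) := by
  rw [← gphi_integral]
  have := tendsto_setIntegral_of_monotone (s := fun x : ℝ => Iic x)
    (fun i => measurableSet_Iic) (fun a b hab => Iic_subset_Iic.2 hab)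
    (by rw [iUnion_Iic]; exact gphi_integrable.integrableOn)
  simp only [iUnion_Iic, Measure.restrict_univ] at this
  exact this

lemma Phi0_tendsto_atBot : Tendsto Phi0 atBot (𝓝 0) := by
  have hI : ⋂ n : ℝ, Iic (-n) = (∅ : Set ℝ) := by
    ext x
    simp only [mem_iInter, mem_Iic, mem_empty_iff_false, iff_false, not_forall, not_le]
    exact ⟨-(x - 1), by linarith⟩
  have h1 : Tendsto (fun n : ℝ => Phi0 (-n)) atTop (𝓝 0) := by
    have := tendsto_setIntegral_of_antitone (s := fun n : ℝ => Iic (-n))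
      (fun i => measurableSet_Iic) (fun a b hab => Iic_subset_Iic.2 (by linarith))
      ⟨0, gphi_integrable.integrableOn⟩
    simpa [hI, Phi0] using this
  have := h1.comp tendsto_neg_atBot_atTop
  exact this.congr (fun x => by simp)

lemma Phi0_image : Phi0 '' univ = Ioo 0 1 := by
  apply Subset.antisymm
  · rintro _ ⟨x, -, rfl⟩; exact ⟨Phi0_pos x, Phi0_lt_one x⟩
  · rintro y ⟨hy0, hy1⟩
    obtain ⟨a, ha⟩ := (Phi0_tendsto_atBot.eventually (eventually_lt_nhds hy0)).exists
    obtain ⟨b, hb⟩ := (Phi0_tendsto_atTop.eventually (eventually_gt_nhds hy1)).exists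
    have hab : a ≤ b := by
      by_contra h
      exact absurd (Phi0_strictMono.lt_iff_lt.2 (lt_of_not_ge h)) (by linarith [ha, hb])
    obtain ⟨x, -, hx⟩ := intermediate_value_Icc hab (Phi0_cont.continuousOn) ⟨ha.le, hb.le⟩
    exact ⟨x, trivial, hx⟩


lemma gphi_hasDerivAt (x : ℝ) : HasDerivAt gphi (-x * gphi x) x := by
  have h1 : HasDerivAt (fun t : ℝ => -t ^ 2 / 2) (-x) x := by
    have := ((hasDerivAt_pow 2 x).neg).div_const 2
    simpa using this.congr_deriv (by push_cast; ring)
  have h2 : HasDerivAt (fun t : ℝ => Real.exp (-t ^ 2 / 2)) (Real.exp (-x ^ 2 / 2) * (-x)) x :=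
    h1.exp
  have := h2.div_const (Real.sqrt (2 * Real.pi))
  have heq : Real.exp (-x ^ 2 / 2) * (-x) / Real.sqrt (2 * Real.pi) = -x * gphi x := by
    rw [gphi]; ring
  rw [heq] at this
  exact this

lemma gphi_even (x : ℝ) : gphi (-x) = gphi x := by rw [gphi, gphi]; ring_nf

lemma gphi_tendsto_atTop : Tendsto gphi atTop (𝓝 0) := by
  have h1 : Tendsto (fun x : ℝ => -x ^ 2 / 2) atTop atBot := by
    apply Tendsto.atBot_div_const (by norm_num)
    exact tendsto_neg_atTop_atBot.comp (tendsto_pow_atTop (two_ne_zero))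
  have := Real.tendsto_exp_atBot.comp h1
  have h2 : Tendsto (fun x : ℝ => Real.exp (-x ^ 2 / 2) / Real.sqrt (2 * Real.pi)) atTop
      (𝓝 (0 / Real.sqrt (2 * Real.pi))) := this.div_const _
  rw [zero_div] at h2
  exact h2

lemma gphi_tendsto_atBot : Tendsto gphi atBot (𝓝 0) := by
  have := (gphi_tendsto_atTop.comp tendsto_neg_atBot_atTop)
  exact this.congr fun x => by simp [Function.comp, gphi_even]

noncomputable def Fa : ℝ → ℝ := fun x => -(gphi x * (Phi0 x - 1/2))

lemma Fa_hasDerivAt (x : ℝ) :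
    HasDerivAt Fa (x * gphi x * (Phi0 x - 1/2) - gphi x ^ 2) x := by
  have := ((gphi_hasDerivAt x).mul ((Phi0_hasDerivAt x).sub_const (1/2))).neg
  exact this.congr_deriv (by ring)

lemma h_integrable : Integrable (fun x : ℝ => x * gphi x * (Phi0 x - 1/2)) := by
  have hb : Integrable (fun x : ℝ => |x * Real.exp (-(1/2 : ℝ) * x ^ 2)| * (Real.sqrt (2 * Real.pi))⁻¹) :=
    ((integrable_mul_exp_neg_mul_sq (by norm_num)).abs).mul_const _
  apply Integrable.mono' hb
  · exact ((continuous_id.mul gphi_cont).mul (Phi0_cont.sub continuous_const)).aestronglyMeasurable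
  · refine Filter.Eventually.of_forall fun x => ?_
    have h1 : |Phi0 x - 1/2| ≤ 1 := by
      rw [abs_le]; constructor <;> [linarith [Phi0_pos x]; linarith [Phi0_lt_one x]]
    have h2 : |x * gphi x * (Phi0 x - 1/2)| ≤ |x * gphi x| := by
      rw [abs_mul]
      nlinarith [abs_nonneg (x * gphi x)]
    rw [Real.norm_eq_abs]
    refine h2.trans (le_of_eq ?_)
    have h3 : |x * gphi x| = |x * Real.exp (-(1/2:ℝ) * x^2)| * (Real.sqrt (2*Real.pi))⁻¹ := by
      rw [show gphi x = Real.exp (-(1/2:ℝ) * x^2) * (Real.sqrt (2*Real.pi))⁻¹ by rw [gphi]; ring_nf]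
      rw [abs_mul, abs_mul, abs_mul, abs_of_pos (by positivity : (0:ℝ) < (Real.sqrt (2*Real.pi))⁻¹)]
      ring
    exact h3

lemma gphi_sq_eq (x : ℝ) : gphi x ^ 2 = Real.exp (-(1:ℝ) * x ^ 2) * (2 * Real.pi)⁻¹ := by
  rw [gphi, div_pow, ← Real.exp_nat_mul, Real.sq_sqrt (by positivity)]
  push_cast
  ring_nf

lemma gphi_sq_integrable : Integrable (fun x : ℝ => gphi x ^ 2) := by
  simp only [gphi_sq_eq]
  exact (integrable_exp_neg_mul_sq (by norm_num)).mul_const _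

lemma gphi_sq_integral : ∫ x : ℝ, gphi x ^ 2 = Real.sqrt Real.pi / (2 * Real.pi) := by
  simp only [gphi_sq_eq]
  rw [integral_mul_const, integral_gaussian]
  rw [div_one]
  ring

lemma J_eq : ∫ x : ℝ, x * gphi x * (Phi0 x - 1/2) = Real.sqrt Real.pi / (2 * Real.pi) := by
  set h : ℝ → ℝ := fun x => x * gphi x * (Phi0 x - 1/2) with hh
  have hcont : Continuous h := (continuous_id.mul gphi_cont).mul (Phi0_cont.sub continuous_const)
  have key : ∀ n : ℝ, ∫ x in (-n)..n, h x
      = (Fa n - Fa (-n)) + ∫ x in (-n)..n, gphi x ^ 2 := by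
    intro n
    have hftc : ∫ x in (-n)..n, (h x - gphi x ^ 2) = Fa n - Fa (-n) := by
      apply intervalIntegral.integral_eq_sub_of_hasDerivAt
      · exact fun x _ => Fa_hasDerivAt x
      · exact (hcont.sub (gphi_cont.pow 2)).intervalIntegrable _ _
    have hsub : ∫ x in (-n)..n, (h x - gphi x ^ 2)
        = (∫ x in (-n)..n, h x) - ∫ x in (-n)..n, gphi x ^ 2 :=
      intervalIntegral.integral_sub (hcont.intervalIntegrable _ _)
        ((gphi_cont.pow 2).intervalIntegrable _ _)
    rw [hsub] at hftc
    linarith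
  have hlim1 : Tendsto (fun n : ℝ => ∫ x in (-n)..n, h x) atTop (𝓝 (∫ x, h x)) :=
    intervalIntegral_tendsto_integral h_integrable tendsto_neg_atTop_atBot tendsto_id
  have hFtop : Tendsto (fun n : ℝ => Fa n) atTop (𝓝 0) := by
    have h := (gphi_tendsto_atTop.mul (Phi0_tendsto_atTop.sub_const (1/2))).neg
    rw [show -((0:ℝ) * (1 - 1/2)) = 0 by ring] at h
    exact h
  have hFbot : Tendsto (fun n : ℝ => Fa (-n)) atTop (𝓝 0) := by
    have h0 : Tendsto Fa atBot (𝓝 0) := by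
      have h := (gphi_tendsto_atBot.mul (Phi0_tendsto_atBot.sub_const (1/2))).neg
      rw [show -((0:ℝ) * (0 - 1/2)) = 0 by ring] at h
      exact h
    exact h0.comp tendsto_neg_atTop_atBot
  have hlim2 : Tendsto (fun n : ℝ => (Fa n - Fa (-n)) + ∫ x in (-n)..n, gphi x ^ 2) atTop
      (𝓝 (0 - 0 + ∫ x, gphi x ^ 2)) :=
    (hFtop.sub hFbot).add
      (intervalIntegral_tendsto_integral gphi_sq_integrable tendsto_neg_atTop_atBot tendsto_id)
  have := tendsto_nhds_unique (hlim1.congr fun n => key n) hlim2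
  rw [this, gphi_sq_integral]
  ring


theorem normal_first_LP_moment
    (Φ Q S₁ : ℝ → ℝ)
    (hΦ : ∀ x, Φ x = ∫ t in Iic x, Real.exp (-t ^ 2 / 2) / Real.sqrt (2 * Real.pi))
    (hQ : ∀ u ∈ Ioo (0:ℝ) 1, Φ (Q u) = u)
    (hS₁ : ∀ u, S₁ u = Real.sqrt 12 * (u - 1 / 2))
    (LP₁ : ℝ) (hLP₁ : LP₁ = ∫ u in Ioo (0:ℝ) 1, Q u * S₁ u) :
    LP₁ ^ 2 = 3 / Real.pi := by
  have hΦP : Φ = Phi0 := by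
    funext x; rw [hΦ x]; rfl
  have hQP : ∀ x : ℝ, Q (Phi0 x) = x := by
    intro x
    have := hQ (Phi0 x) ⟨Phi0_pos x, Phi0_lt_one x⟩
    rw [hΦP] at this
    exact Phi0_strictMono.injective this
  have hcv : ∫ u in Ioo (0:ℝ) 1, Q u * S₁ u
      = ∫ x : ℝ, |gphi x| • (Q (Phi0 x) * S₁ (Phi0 x)) := by
    rw [← Phi0_image,
      integral_image_eq_integral_abs_deriv_smul MeasurableSet.univ
        (fun x _ => (Phi0_hasDerivAt x).hasDerivWithinAt)
        (Phi0_strictMono.injective.injOn) (fun u => Q u * S₁ u),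
      Measure.restrict_univ]
  have hint : ∫ x : ℝ, |gphi x| • (Q (Phi0 x) * S₁ (Phi0 x))
      = Real.sqrt 12 * ∫ x : ℝ, x * gphi x * (Phi0 x - 1/2) := by
    rw [← MeasureTheory.integral_const_mul]
    congr 1
    funext x
    rw [hQP x, hS₁, abs_of_pos (gphi_pos x), smul_eq_mul]
    ring
  have hLP : LP₁ = Real.sqrt 12 * (Real.sqrt Real.pi / (2 * Real.pi)) := by
    rw [hLP₁, hcv, hint, J_eq]
  have h12 : Real.sqrt 12 ^ 2 = 12 := Real.sq_sqrt (by norm_num)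
  have hpi : Real.sqrt Real.pi ^ 2 = Real.pi := Real.sq_sqrt Real.pi_pos.le
  have hpi0 : Real.pi ≠ 0 := Real.pi_ne_zero
  rw [hLP, mul_pow, h12, div_pow, mul_pow, hpi]
  field_simp
  ring
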